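/- Let c = (c_1 ≥ … ≥ c_{n−r}) be non-increasing non-negative integers, 0 ≤ x ≤ n − r, d_i = c_{i+x} for 1 ≤ i ≤ n−r−x, and let ã = (ã_1, …, ã_x) be a non-increasing integer sequence with Σ_{i=1}^{x} ã_i = Σ_{i=1}^{x} c_i and (c_1, …, c_x) ≺ ã (ordinary majorization). Then c ≺' (d, ã). -/

import Mathlib

/-- Generalized majorization `g ≺' (d, a)` for 1-indexed integer sequences:
`d` of length `m`, `a` of length `s`, `g` of length `m + s`.
Conventions `d i = +∞` for `i < 1` and `d (m+1) = -∞` are encoded in the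
definition of the set whose infimum is `h j`. -/
def GenMaj (m s : ℕ) (d a g : ℕ → ℤ) : Prop :=
  (∀ i, 1 ≤ i → i ≤ m → g (i + s) ≤ d i) ∧
  (∀ j, 1 ≤ j → j ≤ s →
    ∑ i ∈ Finset.Icc 1 (sInf {i : ℕ | j ≤ i ∧ (m < i - j + 1 ∨ d (i - j + 1) < g i)}), g i
      - ∑ i ∈ Finset.Icc 1
          (sInf {i : ℕ | j ≤ i ∧ (m < i - j + 1 ∨ d (i - j + 1) < g i)} - j), d i
      ≤ ∑ i ∈ Finset.Icc 1 j, a i) ∧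
  (∑ i ∈ Finset.Icc 1 (m + s), g i
    = ∑ i ∈ Finset.Icc 1 m, d i + ∑ i ∈ Finset.Icc 1 s, a i)

/-- If `ã` is non-increasing with `Σ ã = Σ_{1..x} c` and `(c_1,…,c_x) ≺ ã`,
then `c ≺' (d, ã)` for `d` the truncation `d_i = c_{i+x}`. -/
theorem stmt12 (N x : ℕ) (hx : x ≤ N) (c : ℕ → ℤ)
    (hcmono : ∀ i, 1 ≤ i → i < N → c (i + 1) ≤ c i)
    (hcnn : ∀ i, 1 ≤ i → i ≤ N → 0 ≤ c i)
    (atil : ℕ → ℤ)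
    (hamono : ∀ i, 1 ≤ i → i < x → atil (i + 1) ≤ atil i)
    (hasum : ∑ i ∈ Finset.Icc 1 x, atil i = ∑ i ∈ Finset.Icc 1 x, c i)
    (hmaj : ∀ j, 1 ≤ j → j ≤ x - 1 →
      ∑ i ∈ Finset.Icc 1 j, c i ≤ ∑ i ∈ Finset.Icc 1 j, atil i) :
    GenMaj (N - x) x (fun i => c (i + x)) atil c := by
  set m := N - x with hm
  -- extended antitonicity
  have key : ∀ a b : ℕ, 1 ≤ a → a ≤ b → b ≤ N → c b ≤ c a := by
    intro a b ha hab hbN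
    induction b, hab using Nat.le_induction with
    | base => exact le_refl _
    | succ b hb ih =>
      exact le_trans (hcmono b (by omega) (by omega)) (ih (by omega))
  refine ⟨fun i _ _ => le_refl _, ?_, ?_⟩
  · intro j hj hjx
    set S := {i : ℕ | j ≤ i ∧ (m < i - j + 1 ∨ c (i - j + 1 + x) < c i)} with hS
    have hSne : S.Nonempty := ⟨m + j, by constructor <;> omega⟩
    set h := sInf S with hh
    have hhS : h ∈ S := Nat.sInf_mem hSne
    have hjh : j ≤ h := hhS.1
    have hhm : h ≤ m + j := Nat.sInf_le ⟨by omega, by left; omega⟩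
    have heq : ∀ i, j ≤ i → i < h → c i = c (i - j + 1 + x) := by
      intro i hji hih
      have hnot : i ∉ S := Nat.notMem_of_lt_sInf hih
      simp only [hS, Set.mem_setOf_eq, not_and, not_or, not_lt] at hnot
      have := hnot hji
      have hle : c (i - j + 1 + x) ≤ c i :=
        key i (i - j + 1 + x) (by omega) (by omega) (by omega)
      exact le_antisymm this.2 hle
    have main : ∀ t, j ≤ t → t ≤ h →
        ∑ i ∈ Finset.Icc 1 t, c i =
          (∑ i ∈ Finset.Icc 1 (t - j), c (i + x)) + ∑ i ∈ Finset.Icc 1 (j - 1), c i + c t := by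
      intro t hjt hth
      induction t, hjt using Nat.le_induction with
      | base =>
        have hj' : j - 1 + 1 = j := by omega
        rw [show j - j = 0 from by omega]
        simp only [Finset.Icc_eq_empty_of_lt (by omega : (0:ℕ) < 1), Finset.sum_empty, zero_add]
        conv_lhs => rw [← hj', Finset.sum_Icc_succ_top (by omega)]
        rw [hj']
      | succ t ht ih =>
        have ih' := ih (by omega)
        rw [Finset.sum_Icc_succ_top (by omega : 1 ≤ t + 1), ih',
          show t + 1 - j = (t - j) + 1 from by omega,
          Finset.sum_Icc_succ_top (by omega : 1 ≤ t - j + 1),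
          show t - j + 1 + x = t - j + 1 + x from rfl]
        have := heq t ht (by omega)
        rw [this]
        ring
    have hmain := main h hjh le_rfl
    simp only []
    rw [hmain]
    have hch : c h ≤ c j := key j h hj hjh (by omega)
    have hsumj : ∑ i ∈ Finset.Icc 1 (j - 1), c i + c j = ∑ i ∈ Finset.Icc 1 j, c i := by
      have hj' : j - 1 + 1 = j := by omega
      conv_rhs => rw [← hj', Finset.sum_Icc_succ_top (by omega)]
      rw [hj']
    have hfin : ∑ i ∈ Finset.Icc 1 j, c i ≤ ∑ i ∈ Finset.Icc 1 j, atil i := by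
      rcases eq_or_lt_of_le hjx with heqx | hlt
      · rw [heqx, hasum]
      · exact hmaj j hj (by omega)
    linarith
  · have gen : ∀ k : ℕ, ∑ i ∈ Finset.Icc 1 (x + k), c i =
        ∑ i ∈ Finset.Icc 1 x, c i + ∑ i ∈ Finset.Icc 1 k, c (i + x) := by
      intro k
      induction k with
      | zero => simp
      | succ k ih =>
        rw [show x + (k + 1) = (x + k) + 1 from rfl,
          Finset.sum_Icc_succ_top (by omega : 1 ≤ x + k + 1), ih,
          Finset.sum_Icc_succ_top (by omega : 1 ≤ k + 1)]
        ring_nf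
        conv_rhs => enter [2, 2, i]; rw [Nat.add_comm x i]
        ring
    have := gen m
    rw [show x + m = m + x from by ring] at this
    rw [this, hasum]
    ring
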